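/- Let Φ be an irreducible root system not of simply laced type with an abelian nilradical Ψ (type B_n with Ψ = {ε_1, ε_1 ± ε_j : 2 ≤ j ≤ n}, or type C_n with Ψ = {ε_i + ε_j : 1 ≤ i ≤ j ≤ n}). If S ⊂ Ψ is an orthogonal subset containing the highest short root θ_s of Ψ, then S′ = (S ∖ {θ_s}) ∪ {θ, 2θ_s − θ} is an orthogonal subset of Ψ containing one fewer short root and two more long roots, where θ is the highest root. -/

import Mathlib

open scoped Classical RealInnerProductSpace

/-- The pairing `⟨γ, α^∨⟩ = 2(γ,α)/(α,α)`. -/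
noncomputable def pairing {V : Type*} [NormedAddCommGroup V] [InnerProductSpace ℝ V]
    (γ α : V) : ℝ :=
  2 * ⟪γ, α⟫ / ⟪α, α⟫

/-- A finite (crystallographic, reduced) root system in a Euclidean space. -/
structure IsRootSystem {V : Type*} [NormedAddCommGroup V] [InnerProductSpace ℝ V]
    (Φ : Set V) : Prop where
  finite : Φ.Finite
  ne_zero : ∀ α ∈ Φ, α ≠ 0
  neg_mem : ∀ α ∈ Φ, -α ∈ Φ
  reflect_mem : ∀ α ∈ Φ, ∀ β ∈ Φ, β - pairing β α • α ∈ Φ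
  crystal : ∀ α ∈ Φ, ∀ β ∈ Φ, ∃ n : ℤ, pairing β α = n
  reduced : ∀ α ∈ Φ, ∀ t : ℝ, t • α ∈ Φ → t = 1 ∨ t = -1

/-- Irreducibility of a root system: no nontrivial orthogonal decomposition. -/
def IsIrreducibleRS {V : Type*} [NormedAddCommGroup V] [InnerProductSpace ℝ V]
    (Φ : Set V) : Prop :=
  ∀ Φ₁ Φ₂ : Set V, Φ = Φ₁ ∪ Φ₂ → (∀ α ∈ Φ₁, ∀ β ∈ Φ₂, ⟪α, β⟫ = 0) → Φ₁ = ∅ ∨ Φ₂ = ∅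

/-- A set of roots is strongly orthogonal if for any two distinct elements neither the sum
nor the difference is a root. -/
def StronglyOrthogonal {V : Type*} [NormedAddCommGroup V] [InnerProductSpace ℝ V]
    (Φ : Set V) (S : Set V) : Prop :=
  ∀ α ∈ S, ∀ β ∈ S, α ≠ β → α + β ∉ Φ ∧ α - β ∉ Φ

/-- A set of pairwise orthogonal vectors. -/
def OrthogonalSet {V : Type*} [NormedAddCommGroup V] [InnerProductSpace ℝ V]
    (S : Set V) : Prop :=
  ∀ α ∈ S, ∀ β ∈ S, α ≠ β → ⟪α, β⟫ = 0

/-- The standard basis vector `ε_i` of `ℝ^n`. -/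
noncomputable def eps (n : ℕ) (i : Fin n) : EuclideanSpace ℝ (Fin n) :=
  EuclideanSpace.single i (1 : ℝ)

/-- The abelian nilradical of type `B_{n+2}`: `Ψ = {ε_1} ∪ {ε_1 ± ε_j : j ≥ 2}`. -/
def PsiB (n : ℕ) : Set (EuclideanSpace ℝ (Fin (n + 2))) :=
  {v | v = eps (n + 2) 0 ∨
    ∃ j : Fin (n + 2), j ≠ 0 ∧ (v = eps (n + 2) 0 + eps (n + 2) j ∨
      v = eps (n + 2) 0 - eps (n + 2) j)}

/-- The abelian nilradical of type `C_{n+2}`: `Ψ = {ε_i + ε_j : 1 ≤ i ≤ j ≤ n}`. -/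
def PsiC (n : ℕ) : Set (EuclideanSpace ℝ (Fin (n + 2))) :=
  {v | ∃ i j : Fin (n + 2), v = eps (n + 2) i + eps (n + 2) j}

lemma inner_eps_left (n : ℕ) (i : Fin n) (v : EuclideanSpace ℝ (Fin n)) :
    ⟪eps n i, v⟫ = v i := by
  simp [eps, EuclideanSpace.inner_single_left]

lemma eps_apply (n : ℕ) (i j : Fin n) : eps n i j = if j = i then 1 else 0 := by
  simp [eps, EuclideanSpace.single_apply]

lemma norm_eq_iff_inner {V : Type*} [NormedAddCommGroup V] [InnerProductSpace ℝ V]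
    (v w : V) : ‖v‖ = ‖w‖ ↔ ⟪v, v⟫ = ⟪w, w⟫ := by
  have h1 : ‖v‖ = Real.sqrt ⟪v, v⟫ := by
    rw [real_inner_self_eq_norm_mul_norm, Real.sqrt_mul_self (norm_nonneg v)]
  have h2 : ‖w‖ = Real.sqrt ⟪w, w⟫ := by
    rw [real_inner_self_eq_norm_mul_norm, Real.sqrt_mul_self (norm_nonneg w)]
  constructor
  · intro h
    rw [real_inner_self_eq_norm_mul_norm, real_inner_self_eq_norm_mul_norm, h]
  · intro h; rw [h1, h2, h]

attribute [-simp] inner_self_eq_norm_sq_to_K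

/-- in the non-simply-laced cases `B`, `C` with abelian nilradical `Ψ`,
if `S ⊆ Ψ` is orthogonal and contains the highest short root `θ_s` of `Ψ`, then
`S' = (S ∖ {θ_s}) ∪ {θ, 2θ_s - θ}` is an orthogonal subset of `Ψ` with one fewer short root
and two more long roots. -/
theorem stmt13 (n : ℕ)
    (Ψ : Set (EuclideanSpace ℝ (Fin (n + 2)))) (θs θ : EuclideanSpace ℝ (Fin (n + 2)))
    (hcase :
      (Ψ = PsiB n ∧ θs = eps (n + 2) 0 ∧ θ = eps (n + 2) 0 + eps (n + 2) 1) ∨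
      (Ψ = PsiC n ∧ θs = eps (n + 2) 0 + eps (n + 2) 1 ∧ θ = eps (n + 2) 0 + eps (n + 2) 0))
    (S : Finset (EuclideanSpace ℝ (Fin (n + 2)))) (hSΨ : ↑S ⊆ Ψ)
    (horth : OrthogonalSet (↑S : Set (EuclideanSpace ℝ (Fin (n + 2)))))
    (hθs : θs ∈ S) :
    (↑(insert θ (insert ((2 : ℝ) • θs - θ) (S.erase θs))) :
        Set (EuclideanSpace ℝ (Fin (n + 2)))) ⊆ Ψ ∧
    OrthogonalSet (↑(insert θ (insert ((2 : ℝ) • θs - θ) (S.erase θs))) :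
        Set (EuclideanSpace ℝ (Fin (n + 2)))) ∧
    ((insert θ (insert ((2 : ℝ) • θs - θ) (S.erase θs))).filter
        (fun v => ‖v‖ = ‖θs‖)).card = (S.filter (fun v => ‖v‖ = ‖θs‖)).card - 1 ∧
    ((insert θ (insert ((2 : ℝ) • θs - θ) (S.erase θs))).filter
        (fun v => ‖v‖ = ‖θ‖)).card = (S.filter (fun v => ‖v‖ = ‖θ‖)).card + 2 := by
  rcases hcase with ⟨hΨ, hts, ht⟩ | ⟨hΨ, hts, ht⟩
  · -- Case B
    subst hΨ hts ht
    set e0 := eps (n + 2) 0 with he0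
    set e1 := eps (n + 2) 1 with he1
    have hm : (2 : ℝ) • e0 - (e0 + e1) = e0 - e1 := by module
    have h01 : (1 : Fin (n + 2)) ≠ 0 := by simp
    -- S = {e0}
    have hS : S = {e0} := by
      rw [Finset.eq_singleton_iff_unique_mem]
      refine ⟨hθs, fun x hx => ?_⟩
      by_contra hne
      have h0 := horth e0 (Finset.mem_coe.mpr hθs) x (Finset.mem_coe.mpr hx) (Ne.symm hne)
      rcases hSΨ (Finset.mem_coe.mpr hx) with h | ⟨j, hj, h | h⟩
      · exact hne h
      · rw [h] at h0
        simp [he0, he1, inner_add_right, inner_eps_left, eps_apply, hj, Ne.symm hj] at h0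
      · rw [h] at h0
        simp [he0, he1, inner_sub_right, inner_eps_left, eps_apply, hj, Ne.symm hj] at h0
    have hθm : e0 + e1 ≠ (2 : ℝ) • e0 - (e0 + e1) := by
      rw [hm]
      intro h
      have := congrArg (fun v : EuclideanSpace ℝ (Fin (n + 2)) => v 1) h
      simp [he0, he1, eps_apply, h01] at this
      norm_num at this
    have hiθ : ⟪e0 + e1, e0 + e1⟫ = 2 := by
      simp [he0, he1, inner_add_left, inner_add_right, inner_eps_left, eps_apply, h01]
      norm_num
    have hiθs : ⟪e0, e0⟫ = (1 : ℝ) := by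
      simp [he0, inner_eps_left, eps_apply]
    have him : ⟪e0 - e1, e0 - e1⟫ = 2 := by
      simp [he0, he1, inner_sub_left, inner_sub_right, inner_eps_left, eps_apply, h01]
      norm_num
    have hnθ : ‖e0 + e1‖ ≠ ‖e0‖ := by
      rw [Ne, norm_eq_iff_inner, hiθ, hiθs]; norm_num
    have hnm : ‖e0 - e1‖ ≠ ‖e0‖ := by
      rw [Ne, norm_eq_iff_inner, him, hiθs]; norm_num
    have hnmθ : ‖e0 - e1‖ = ‖e0 + e1‖ := by
      rw [norm_eq_iff_inner, him, hiθ]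
    have hnθsθ : ‖e0‖ ≠ ‖e0 + e1‖ := by
      rw [Ne, norm_eq_iff_inner, hiθs, hiθ]; norm_num
    rw [hS, Finset.erase_singleton]
    refine ⟨?_, ?_, ?_, ?_⟩
    · intro x hx
      rw [Finset.coe_insert, Finset.coe_insert] at hx
      rcases hx with h | h | h
      · exact Or.inr ⟨1, h01, Or.inl h⟩
      · rw [hm] at h
        exact Or.inr ⟨1, h01, Or.inr h⟩
      · simp at h
    · intro α hα β hβ hne
      rw [Finset.coe_insert, Finset.coe_insert] at hα hβ
      have hθmi : ⟪e0 + e1, (2 : ℝ) • e0 - (e0 + e1)⟫ = 0 := by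
        rw [hm]
        simp [he0, he1, inner_add_left, inner_sub_right, inner_eps_left, eps_apply, h01]
      rcases hα with hα | hα | hα <;> rcases hβ with hβ | hβ | hβ <;>
        first
        | (exact absurd (hα.trans hβ.symm) hne)
        | (rw [hα, hβ]; exact hθmi)
        | (rw [hα, hβ, real_inner_comm]; exact hθmi)
        | simp_all
    · rw [Finset.filter_insert, Finset.filter_insert, hm]
      rw [if_neg hnθ, if_neg hnm]
      simp [Finset.filter_singleton]
    · rw [Finset.filter_insert, Finset.filter_insert, hm]
      rw [if_pos rfl, if_pos hnmθ]
      rw [Finset.filter_singleton, if_neg hnθsθ]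
      rw [hm] at hθm
      simp [hθm]
  · -- Case C
    subst hΨ hts ht
    set e0 := eps (n + 2) 0 with he0
    set e1 := eps (n + 2) 1 with he1
    set T := S.erase (e0 + e1) with hT
    have h01 : (1 : Fin (n + 2)) ≠ 0 := by simp
    have hm : (2 : ℝ) • (e0 + e1) - (e0 + e0) = e1 + e1 := by module
    -- coordinates of elements of T vanish at 0 and 1
    have key : ∀ α ∈ T, α 0 = 0 ∧ α 1 = 0 := by
      intro α hα
      obtain ⟨hne, hαS⟩ := Finset.mem_erase.mp hα
      have h0 := horth (e0 + e1) (Finset.mem_coe.mpr hθs) α (Finset.mem_coe.mpr hαS)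
        (Ne.symm hne)
      rw [inner_add_left, he0, he1, inner_eps_left, inner_eps_left] at h0
      obtain ⟨i, j, rfl⟩ := hSΨ (Finset.mem_coe.mpr hαS)
      have hcoord : ∀ k : Fin (n + 2),
          (0 : ℝ) ≤ (eps (n + 2) i + eps (n + 2) j) k := by
        intro k
        simp only [PiLp.add_apply, eps_apply]
        split_ifs <;> norm_num
      constructor <;> [skip; skip] <;> linarith [hcoord 0, hcoord 1]
    have hθ0 : (e0 + e0) 0 = 2 := by
      simp [he0, eps_apply]; norm_num
    have hθ1 : (e0 + e0) 1 = 0 := by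
      simp [he0, eps_apply, h01]
    have hm0 : (e1 + e1) 0 = 0 := by
      simp [he1, eps_apply, Ne.symm h01]
    have hm1 : (e1 + e1) 1 = 2 := by
      simp [he1, eps_apply]; norm_num
    have hθT : e0 + e0 ∉ T := by
      intro h
      have := (key _ h).1
      rw [hθ0] at this; norm_num at this
    have hmT : e1 + e1 ∉ T := by
      intro h
      have := (key _ h).2
      rw [hm1] at this; norm_num at this
    have hθm : e0 + e0 ≠ e1 + e1 := by
      intro h
      have := congrArg (fun v : EuclideanSpace ℝ (Fin (n + 2)) => v 0) h
      simp only at this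
      rw [hθ0, hm0] at this; norm_num at this
    -- inner product facts
    have hiθm : ⟪e0 + e0, e1 + e1⟫ = 0 := by
      simp [he0, he1, inner_add_left, inner_add_right, inner_eps_left, eps_apply, h01]
    have hθα : ∀ α ∈ T, ⟪e0 + e0, α⟫ = 0 := by
      intro α hα
      rw [inner_add_left, he0, inner_eps_left, (key α hα).1]; ring
    have hmα : ∀ α ∈ T, ⟪e1 + e1, α⟫ = 0 := by
      intro α hα
      rw [inner_add_left, he1, inner_eps_left, (key α hα).2]; ring
    -- norm facts
    have hiθs : ⟪e0 + e1, e0 + e1⟫ = 2 := by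
      simp [he0, he1, inner_add_left, inner_add_right, inner_eps_left, eps_apply, h01]
      norm_num
    have hiθ : ⟪e0 + e0, e0 + e0⟫ = 4 := by
      simp [he0, inner_add_left, inner_add_right, inner_eps_left, eps_apply]
      norm_num
    have him : ⟪e1 + e1, e1 + e1⟫ = 4 := by
      simp [he1, inner_add_left, inner_add_right, inner_eps_left, eps_apply]
      norm_num
    have hnθ : ‖e0 + e0‖ ≠ ‖e0 + e1‖ := by
      rw [Ne, norm_eq_iff_inner, hiθ, hiθs]; norm_num
    have hnm : ‖e1 + e1‖ ≠ ‖e0 + e1‖ := by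
      rw [Ne, norm_eq_iff_inner, him, hiθs]; norm_num
    have hnmθ : ‖e1 + e1‖ = ‖e0 + e0‖ := by
      rw [norm_eq_iff_inner, him, hiθ]
    have hnθsθ : ‖e0 + e1‖ ≠ ‖e0 + e0‖ := by
      rw [Ne, norm_eq_iff_inner, hiθs, hiθ]; norm_num
    have hSi : S = insert (e0 + e1) T := (Finset.insert_erase hθs).symm
    have hθsT : e0 + e1 ∉ T := Finset.notMem_erase _ _
    rw [hm]
    refine ⟨?_, ?_, ?_, ?_⟩
    · intro x hx
      rw [Finset.coe_insert, Finset.coe_insert] at hx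
      rcases hx with h | h | h
      · exact ⟨0, 0, h⟩
      · exact ⟨1, 1, h⟩
      · exact hSΨ (Finset.mem_coe.mpr (Finset.mem_of_mem_erase h))
    · intro α hα β hβ hne
      rw [Finset.coe_insert, Finset.coe_insert] at hα hβ
      rcases hα with hα | hα | hα <;> rcases hβ with hβ | hβ | hβ
      · exact absurd (hα.trans hβ.symm) hne
      · rw [hα, hβ]; exact hiθm
      · rw [hα]; exact hθα β hβ
      · rw [hα, hβ, real_inner_comm]; exact hiθm
      · exact absurd (hα.trans hβ.symm) hne
      · rw [hα]; exact hmα β hβ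
      · rw [hβ, real_inner_comm]; exact hθα α hα
      · rw [hβ, real_inner_comm]; exact hmα α hα
      · exact horth α (Finset.mem_coe.mpr (Finset.mem_of_mem_erase hα))
          β (Finset.mem_coe.mpr (Finset.mem_of_mem_erase hβ)) hne
    · rw [Finset.filter_insert, Finset.filter_insert, if_neg hnθ, if_neg hnm]
      conv_rhs => rw [hSi, Finset.filter_insert, if_pos rfl]
      rw [Finset.card_insert_of_notMem (fun h => hθsT (Finset.mem_of_mem_filter _ h))]
      simp
    · rw [Finset.filter_insert, Finset.filter_insert, if_pos rfl, if_pos hnmθ]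
      conv_rhs => rw [hSi, Finset.filter_insert, if_neg hnθsθ]
      have hA : e0 + e0 ∉ insert (e1 + e1)
          (Finset.filter (fun v => ‖v‖ = ‖e0 + e0‖) T) := by
        intro h
        rcases Finset.mem_insert.mp h with h | h
        · exact hθm h
        · exact hθT (Finset.mem_of_mem_filter _ h)
      rw [Finset.card_insert_of_notMem hA, Finset.card_insert_of_notMem
        (fun h => hmT (Finset.mem_of_mem_filter _ h))]
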